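/- arXiv:1605.07983 — 3 statements merged into one kernel-verified Lean document; each statement's English description precedes it below -/
import Mathlib

section
/- Let I be a small category and O : I → Set a functor whose colimit is a one-point set. Let D : I → Cat be a functor and K a poset. Then the natural map Hom_{Cat^I}(O, D) × K → Hom_{Cat^I}(O, D × K) sending (f₀, k) to the natural transformation x ↦ (f₀(x), k) is an isomorphism of categories, where Hom denotes the internal hom of the functor category Cat^I (with O regarded as a diagram of discrete categories) and D × K is the objectwise product with K. -/
open CategoryTheory

universe w

variable {I : Type} [SmallCategory I]

/-- An object of the internal-hom category `Hom_{Cat^I}(O, D)` of the cartesian closed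
category `Cat^I`, where `O : I ⥤ Set` is regarded as a diagram of discrete categories:
a natural transformation `O ⟶ D`, i.e. a family of maps `O(i) → ob D(i)` strictly
compatible with the structure maps. -/
@[ext]
structure HomObj (O : I ⥤ Type) (D : I ⥤ Cat.{0, 0}) : Type where
  app : ∀ i : I, O.obj i → D.obj i
  naturality : ∀ {i j : I} (g : i ⟶ j) (x : O.obj i),
    (D.map g).toFunctor.obj (app i x) = app j (O.map g x)

/-- A morphism of the internal-hom category `Hom_{Cat^I}(O, D)` (a "modification"). -/
@[ext]
structure HomHom {O : I ⥤ Type} {D : I ⥤ Cat.{0, 0}} (η θ : HomObj O D) : Type where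
  app : ∀ (i : I) (x : O.obj i), η.app i x ⟶ θ.app i x
  naturality : ∀ {i j : I} (g : i ⟶ j) (x : O.obj i),
    (D.map g).toFunctor.map (app i x) =
      eqToHom (η.naturality g x) ≫ app j (O.map g x) ≫ eqToHom (θ.naturality g x).symm

instance {O : I ⥤ Type} {D : I ⥤ Cat.{0, 0}} : Category (HomObj O D) where
  Hom := HomHom
  id η :=
    { app := fun i x => 𝟙 (η.app i x)
      naturality := fun g x => by simp }
  comp {η θ ρ} u v :=
    { app := fun i x => u.app i x ≫ v.app i x
      naturality := fun g x => by
        rw [Functor.map_comp, u.naturality g x, v.naturality g x]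
        simp }
  id_comp u := HomHom.ext (by funext i x; exact Category.id_comp (u.app i x))
  comp_id u := HomHom.ext (by funext i x; exact Category.comp_id (u.app i x))
  assoc u v w := HomHom.ext (by funext i x; exact Category.assoc _ _ _)

/-- The objectwise product of a diagram `D : I ⥤ Cat` with a fixed small category `K`. -/
def prodK (D : I ⥤ Cat.{0, 0}) (K : Type) [SmallCategory K] : I ⥤ Cat.{0, 0} where
  obj i := Cat.of (D.obj i × K)
  map g := ((D.map g).toFunctor.prod (𝟭 K)).toCatHom
  map_id i := by
    show ((D.map (𝟙 i)).toFunctor.prod (𝟭 K)).toCatHom = _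
    rw [D.map_id]; rfl
  map_comp f g := by
    show ((D.map (f ≫ g)).toFunctor.prod (𝟭 K)).toCatHom = _
    rw [D.map_comp]; rfl

/-- The natural transformation `D × K ⟶ D × L` induced by a functor `F : K ⥤ L`,
acting as the identity on the `D`-component. -/
def prodMapNat (D : I ⥤ Cat.{0, 0}) {K L : Type} [SmallCategory K] [SmallCategory L]
    (F : K ⥤ L) : prodK D K ⟶ prodK D L where
  app i := ((𝟭 (D.obj i)).prod F).toCatHom
  naturality i j g := rfl

private lemma eq_conj {C : Type w} [Category C] {a a' b b' : C} (p : a = a') (q : b' = b)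
    {f : a ⟶ b} {g : a' ⟶ b'} (h : f = eqToHom p ≫ g ≫ eqToHom q) :
    g = eqToHom p.symm ≫ f ≫ eqToHom q.symm := by
  subst p; subst q; simpa using h.symm

/-- Functoriality of the internal hom `Hom_{Cat^I}(O, −)` in the second variable. -/
def homMap (O : I ⥤ Type) {Y Y' : I ⥤ Cat.{0, 0}} (t : Y ⟶ Y') :
    HomObj O Y ⥤ HomObj O Y' where
  obj η :=
    { app := fun i x => (t.app i).toFunctor.obj (η.app i x)
      naturality := fun {i j} g x => by
        have h := Functor.congr_obj (congrArg Cat.Hom.toFunctor (t.naturality g)) (η.app i x)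
        dsimp at h ⊢
        rw [← h, η.naturality g x] }
  map {η θ} u :=
    { app := fun i x => (t.app i).toFunctor.map (u.app i x)
      naturality := fun {i j} g x => by
        have h := Functor.congr_hom (congrArg Cat.Hom.toFunctor (t.naturality g)) (u.app i x)
        dsimp at h ⊢
        rw [eq_conj _ _ h, u.naturality g x]
        simp [eqToHom_map] }
  map_id η := HomHom.ext (by funext i x; exact (t.app i).toFunctor.map_id _)
  map_comp u v := HomHom.ext (by funext i x; exact (t.app i).toFunctor.map_comp _ _)

/-- The internal hom `Hom_{Cat^I}(O, −)` as a functor `Cat^I ⥤ Cat`. -/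
def homFunctor (O : I ⥤ Type) : (I ⥤ Cat.{0, 0}) ⥤ Cat.{0, 0} where
  obj Y := Cat.of (HomObj O Y)
  map t := (homMap O t).toCatHom
  map_id Y := rfl
  map_comp t s := rfl

/-- `O : I ⥤ Type` has colimit a one-element set. -/
def ColimitIsPoint {I : Type} [SmallCategory I] (O : I ⥤ Type) : Prop :=
  Nonempty (Limits.colimit O) ∧ Subsingleton (Limits.colimit O)

private lemma conj_fst {C D : Type w} [Category C] [Category D] {p p' q q' : C × D}
    (hp : p = p') (hq : q' = q) (f : p' ⟶ q') :
    (eqToHom hp ≫ f ≫ eqToHom hq).1 =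
      eqToHom (congrArg Prod.fst hp) ≫ f.1 ≫ eqToHom (congrArg Prod.fst hq) := by
  subst hp; subst hq; simp

private lemma prod_eqToHom_fst {C D : Type w} [Category C] [Category D] {p q : C × D}
    (h : p = q) : (eqToHom h).1 = eqToHom (congrArg Prod.fst h) := by subst h; rfl

/-- The second component of any `HomObj O (prodK D K)` is constant, provided `colim O`
is a point. -/
private lemma snd_const {I : Type} [SmallCategory I] {O : I ⥤ Type}
    (hO : ColimitIsPoint O) {D : I ⥤ Cat.{0, 0}} {K : Type} [PartialOrder K]
    (ξ : HomObj O (prodK D K)) {i j : I} (x : O.obj i) (y : O.obj j) :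
    (ξ.app i x).2 = (ξ.app j y).2 := by
  have := hO.2
  let c : Limits.Cocone O :=
    { pt := K
      ι :=
        { app := fun i => TypeCat.ofHom (fun x => (ξ.app i x).2)
          naturality := fun i j g => by
            ext x
            exact (congrArg Prod.snd (ξ.naturality g x)).symm } }
  have h1 : Limits.colimit.desc O c (Limits.colimit.ι O i x) = (ξ.app i x).2 :=
    Limits.colimit.ι_desc_apply c i x
  have h2 : Limits.colimit.desc O c (Limits.colimit.ι O j y) = (ξ.app j y).2 :=
    Limits.colimit.ι_desc_apply c j y
  rw [← h1, ← h2, Subsingleton.elim (Limits.colimit.ι O i x) (Limits.colimit.ι O j y)]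

private lemma modif_fst_nat {I : Type} [SmallCategory I] {O : I ⥤ Type}
    {D : I ⥤ Cat.{0, 0}} {K : Type} [PartialOrder K]
    {ξ ξ' : HomObj O (prodK D K)} (v : ξ ⟶ ξ') {i j : I} (g : i ⟶ j) (x : O.obj i)
    (h1 : (D.map g).toFunctor.obj (ξ.app i x).1 = (ξ.app j (O.map g x)).1)
    (h2 : (D.map g).toFunctor.obj (ξ'.app i x).1 = (ξ'.app j (O.map g x)).1) :
    (D.map g).toFunctor.map (v.app i x).1 =
      eqToHom h1 ≫ (v.app j (O.map g x)).1 ≫ eqToHom h2.symm := by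
  have h := congrArg Prod.fst (v.naturality g x)
  erw [conj_fst] at h
  exact h

set_option maxHeartbeats 1000000 in
/-- Let `I` be a small category and `O : I ⥤ Set` a functor whose
colimit is a one-point set.  Let `D : I ⥤ Cat` and `K` a poset.  Then the natural map
`Hom_{Cat^I}(O, D) × K → Hom_{Cat^I}(O, D × K)` sending `(f₀, k)` to the transformation
`x ↦ (f₀(x), k)` is an isomorphism of categories (bijective on objects, full and
faithful), where `Hom` is the internal hom of `Cat^I` (with `O` a diagram of discrete
categories) and `D × K` the objectwise product. -/
theorem stmt3 (I : Type) [SmallCategory I] (O : I ⥤ Type)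
    (hO : ColimitIsPoint O) (D : I ⥤ Cat.{0, 0}) (K : Type) [PartialOrder K] :
    ∃ Φ : HomObj O D × K ⥤ HomObj O (prodK D K),
      (∀ (η : HomObj O D) (k : K) (i : I) (x : O.obj i),
        (Φ.obj (η, k)).app i x = (η.app i x, k)) ∧
      Function.Bijective Φ.obj ∧ Φ.Full ∧ Φ.Faithful := by
  -- a base point of the colimit
  obtain ⟨t⟩ := hO.1
  obtain ⟨i₀, x₀, -⟩ := Limits.Types.jointly_surjective' (F := O) t
  refine ⟨{
    obj := fun p =>
      { app := fun i x => (p.1.app i x, p.2)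
        naturality := fun {i j} g x => Prod.ext (p.1.naturality g x) rfl }
    map := fun {p q} f =>
      { app := fun i x => (f.1.app i x, f.2)
        naturality := fun {i j} g x => by
          apply Prod.ext
          · show (D.map g).toFunctor.map (f.1.app i x) = _
            erw [conj_fst, f.1.naturality g x]
            rfl
          · exact Subsingleton.elim _ _ }
    map_id := fun p => HomHom.ext (by funext i x; rfl)
    map_comp := fun f g => HomHom.ext (by funext i x; rfl) }, fun η k i x => rfl,
    ⟨?_, ?_⟩, ⟨?_⟩, ⟨?_⟩⟩
  · -- injective on objects
    rintro ⟨η, k⟩ ⟨η', k'⟩ h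
    have happ : ∀ i x, (η.app i x, k) = (η'.app i x, k') :=
      fun i x => congrFun (congrFun (congrArg HomObj.app h) i) x
    have hk : k = k' := congrArg Prod.snd (happ i₀ x₀)
    have hη : η = η' := HomObj.ext (funext fun i => funext fun x =>
      congrArg Prod.fst (happ i x))
    exact congrArg₂ Prod.mk hη hk
  · -- surjective on objects
    intro ξ
    refine ⟨⟨{ app := fun i x => (ξ.app i x).1
               naturality := fun {i j} g x => congrArg Prod.fst (ξ.naturality g x) },
             (ξ.app i₀ x₀).2⟩, HomObj.ext ?_⟩
    funext i x
    exact Prod.ext rfl (snd_const hO ξ x₀ x)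
  · -- full
    rintro ⟨η, k⟩ ⟨η', k'⟩ v
    refine ⟨⟨{ app := fun i x => (v.app i x).1
               naturality := fun {i j} g x => ?_ }, (v.app i₀ x₀).2⟩,
      HomHom.ext ?_⟩
    · exact modif_fst_nat v g x (η.naturality g x) (η'.naturality g x)
    · funext i x
      exact Prod.ext rfl (Subsingleton.elim _ _)
  · -- faithful
    rintro ⟨η, k⟩ ⟨η', k'⟩ ⟨f1, f2⟩ ⟨g1, g2⟩ h
    have happ : ∀ i x, ((f1.app i x, f2) :
        (η.app i x ⟶ η'.app i x) × (k ⟶ k')) = (g1.app i x, g2) :=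
      fun i x => congrFun (congrFun (congrArg HomHom.app h) i) x
    refine congrArg₂ Prod.mk (HomHom.ext ?_) (Subsingleton.elim _ _)
    funext i x
    exact congrArg Prod.fst (happ i x)
end

section
/- Let i : A → B be a Dwyer map between posets with factorization A → W → B (W the cosieve, r : W → A the right adjoint retraction), and let F : A → C be a functor to a small category C. Let D denote the pushout of i along F in Cat. Then ob(D) = ob(C) ⊔ (ob(B) \ ob(A)), and for objects d, d' of D: D(d,d') = B(d,d') if both lie in ob(B) \ ob(A); D(d,d') = C(d,d') if both lie in ob(C); D(d,d') = ∅ if d ∈ ob(B) \ ob(A) and d' ∈ ob(C); and D(d,d') = C(d, F(r(d'))) if d ∈ ob(C) and d' ∈ ob(B) \ ob(A). -/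
open CategoryTheory

/-- A monotone map `i : A →o B` of posets is a *sieve* if every `b ≤ i a` lifts to `A`. -/
def IsSieveMap {A B : Type} [PartialOrder A] [PartialOrder B] (i : A →o B) : Prop :=
  ∀ (a : A) (b : B), b ≤ i a → ∃ a' : A, i a' = b

/-- A subset `W` of a poset `B` is a *cosieve* if it is closed under passing to larger
elements. -/
def IsCosieveSet {B : Type} [PartialOrder B] (W : Set B) : Prop :=
  ∀ w ∈ W, ∀ b : B, w ≤ b → b ∈ W

namespace Stmt5Aux

variable {A B : Type} [PartialOrder A] [PartialOrder B] {C : Type} [SmallCategory C]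

inductive EObj (i : A →o B) (W : Set B) (hW : IsCosieveSet W) (r : W →o A) (F : A ⥤ C) : Type where
  | left : C → EObj i W hW r F
  | right : (b : B) → b ∉ Set.range i → EObj i W hW r F

namespace EObj

variable {i : A →o B} {W : Set B} {hW : IsCosieveSet W} {r : W →o A} {F : A ⥤ C}

def EHom (x y : EObj i W hW r F) : Type :=
  match x, y with
  | .left c, .left c' => c ⟶ c'
  | .left c, .right b _ => Σ' (hw : b ∈ W), (c ⟶ F.obj (r ⟨b, hw⟩))
  | .right _ _, .left _ => PEmpty
  | .right b _, .right b' _ => PLift (b ≤ b')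

def eid : (x : EObj i W hW r F) → EHom x x
  | .left c => 𝟙 c
  | .right _ _ => ⟨le_rfl⟩

def ecomp : {x y z : EObj i W hW r F} → EHom x y → EHom y z → EHom x z
  | .left _, .left _, .left _, f, g => f ≫ g
  | .left _, .left _, .right _ _, f, g => ⟨g.1, f ≫ g.2⟩
  | .left _, .right b _, .right b' _, f, g =>
      ⟨hW b f.1 b' g.down, f.2 ≫ F.map (homOfLE (r.monotone (Subtype.mk_le_mk.mpr g.down)))⟩
  | .right _ _, .left _, _, f, _ => PEmpty.elim f
  | .left _, .right _ _, .left _, _, g => PEmpty.elim g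
  | .right _ _, .right _ _, .left _, _, g => PEmpty.elim g
  | .right _ _, .right _ _, .right _ _, f, g => ⟨f.down.trans g.down⟩

instance : Category (EObj i W hW r F) where
  Hom := EHom
  id := eid
  comp := ecomp
  id_comp {x y} f := by
    cases x <;> cases y <;> first
      | exact PEmpty.elim f
      | exact Category.id_comp (obj := C) f
      | exact Category.comp_id (obj := C) f
      | (cases f; simp [ecomp, eid]; rfl)
      | (cases f; simp [ecomp, eid])
      | simp [ecomp, eid]
  comp_id {x y} f := by
    cases x <;> cases y <;> first
      | exact PEmpty.elim f
      | exact Category.id_comp (obj := C) f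
      | exact Category.comp_id (obj := C) f
      | (cases f; simp [ecomp, eid]; rfl)
      | (cases f; simp [ecomp, eid])
      | simp [ecomp, eid]
  assoc {w x y z} f g h := by
    cases w <;> cases x <;> cases y <;> cases z <;>
      first
        | exact PEmpty.elim f | exact PEmpty.elim g | exact PEmpty.elim h
        | exact Category.assoc (obj := C) f g h
        | (cases h; simp [ecomp, ← Functor.map_comp, homOfLE_comp]; rfl)
        | (cases h; simp [ecomp, ← Functor.map_comp, homOfLE_comp]; exact congrArg (PSigma.mk _) (Category.assoc (obj := C) _ _ _))
        | (cases h; simp [ecomp, ← Functor.map_comp, homOfLE_comp])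
        | (cases g; cases h; simp [ecomp, ← Functor.map_comp, homOfLE_comp])
        | (cases f; cases g; cases h; simp [ecomp, ← Functor.map_comp, homOfLE_comp])
        | simp [ecomp, ← Functor.map_comp, homOfLE_comp]


@[simp] lemma id_left (c : C) : 𝟙 (left c : EObj i W hW r F) = 𝟙 c := rfl
lemma comp_ll {c c' c'' : C} (f : (left c : EObj i W hW r F) ⟶ left c') (g : (left c' : EObj i W hW r F) ⟶ left c'') :
    f ≫ g = (show c ⟶ c' from f) ≫ (show c' ⟶ c'' from g) := rfl

/-- the "inr" functor `C ⥤ E` -/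
def inrF : C ⥤ EObj i W hW r F where
  obj := left
  map f := f
  map_id _ := rfl
  map_comp _ _ := rfl

lemma range_mem_W (hiW : ∀ a : A, i a ∈ W) {b : B} (h : b ∈ Set.range i) : b ∈ W := by
  obtain ⟨a, rfl⟩ := h; exact hiW a

def inlObjAux (hiW : ∀ a : A, i a ∈ W) (b : B) : Decidable (b ∈ Set.range i) → EObj i W hW r F
  | isTrue h => .left (F.obj (r ⟨b, range_mem_W hiW h⟩))
  | isFalse h => .right b h

def inlMapAux (hiW : ∀ a : A, i a ∈ W) (hsieve : IsSieveMap i) {b b' : B} (hbb : b ≤ b') :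
    (d : Decidable (b ∈ Set.range i)) → (d' : Decidable (b' ∈ Set.range i)) →
      ((inlObjAux hiW b d : EObj i W hW r F) ⟶ inlObjAux hiW b' d')
  | isTrue h, isTrue h' => F.map (homOfLE (r.monotone (Subtype.mk_le_mk.mpr hbb)))
  | isTrue h, isFalse h' =>
      ⟨hW _ (range_mem_W hiW h) _ hbb, F.map (homOfLE (r.monotone (Subtype.mk_le_mk.mpr hbb)))⟩
  | isFalse h, isTrue h' => by
      exfalso
      obtain ⟨a, rfl⟩ := h'
      obtain ⟨a'', ha''⟩ := hsieve a b hbb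
      exact h ⟨a'', ha''⟩
  | isFalse h, isFalse h' => PLift.up hbb

noncomputable def inlF (hiW : ∀ a : A, i a ∈ W) (hsieve : IsSieveMap i) : B ⥤ EObj i W hW r F where
  obj b := inlObjAux hiW b (Classical.dec _)
  map {b b'} f := inlMapAux hiW hsieve (leOfHom f) _ _
  map_id b := by
    show inlMapAux hiW hsieve _ (Classical.dec _) (Classical.dec _) = eid (inlObjAux hiW b (Classical.dec _))
    cases Classical.dec (b ∈ Set.range i) with
    | isTrue h =>
        show F.map (homOfLE _) = _
        rw [show homOfLE _ = 𝟙 (r ⟨b, range_mem_W hiW h⟩) from rfl, F.map_id]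
        rfl
    | isFalse h => rfl
  map_comp {b b' b''} f g := by
    show inlMapAux hiW hsieve _ (Classical.dec _) (Classical.dec _) =
      ecomp (inlMapAux hiW hsieve (leOfHom f) (Classical.dec _) (Classical.dec _))
        (inlMapAux hiW hsieve (leOfHom g) (Classical.dec _) (Classical.dec _))
    cases Classical.dec (b ∈ Set.range i) with
    | isTrue h =>
      cases Classical.dec (b' ∈ Set.range i) with
      | isTrue h' =>
        cases Classical.dec (b'' ∈ Set.range i) with
        | isTrue h'' =>
          show F.map (homOfLE _) = F.map (homOfLE _) ≫ F.map (homOfLE _)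
          rw [← F.map_comp]
          exact congrArg F.map (Subsingleton.elim _ _)
        | isFalse h'' =>
          exact congrArg (PSigma.mk _) (by simp only [inlMapAux]; rw [← F.map_comp]; exact congrArg F.map (Subsingleton.elim _ _))
      | isFalse h' =>
        cases Classical.dec (b'' ∈ Set.range i) with
        | isTrue h'' => exfalso; obtain ⟨a, rfl⟩ := h''; obtain ⟨a'', ha''⟩ := hsieve a b' (leOfHom g); exact h' ⟨a'', ha''⟩
        | isFalse h'' =>
          exact congrArg (PSigma.mk _) (by simp only [inlMapAux]; rw [← F.map_comp]; exact congrArg F.map (Subsingleton.elim _ _))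
    | isFalse h =>
      cases Classical.dec (b' ∈ Set.range i) with
      | isTrue h' => exfalso; obtain ⟨a, rfl⟩ := h'; obtain ⟨a'', ha''⟩ := hsieve a b (leOfHom f); exact h ⟨a'', ha''⟩
      | isFalse h' =>
        cases Classical.dec (b'' ∈ Set.range i) with
        | isTrue h'' => exfalso; obtain ⟨a, rfl⟩ := h''; obtain ⟨a'', ha''⟩ := hsieve a b' (leOfHom g); exact h' ⟨a'', ha''⟩
        | isFalse h'' => rfl

section Desc
variable {X : Type} [SmallCategory X]

lemma Gmap_eq {P : Type} [Preorder P] (G : P ⥤ X) {a b a' b' : P}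
    (h1 : a = a') (h2 : b = b') (f : a ⟶ b) (f' : a' ⟶ b') :
    G.map f = eqToHom (by rw [h1]) ≫ G.map f' ≫ eqToHom (by rw [h2]) := by
  subst h1; subst h2; rw [Subsingleton.elim f f']; simp

def desc (hadj : ∀ (a : A) (w : W), i a ≤ (w : B) ↔ a ≤ r w)
    (G : B ⥤ X) (H : C ⥤ X) (w : i.monotone.functor ⋙ G = F ⋙ H) :
    EObj i W hW r F ⥤ X where
  obj x := match x with
    | .left c => H.obj c
    | .right b _ => G.obj b
  map {x y} f := match x, y, f with
    | .left _, .left _, u => H.map u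
    | .left _, .right b _, u =>
        H.map u.2 ≫ eqToHom (Functor.congr_obj w (r ⟨b, u.1⟩)).symm ≫
          G.map (homOfLE ((hadj (r ⟨b, u.1⟩) ⟨b, u.1⟩).mpr le_rfl))
    | .right _ _, .left _, u => PEmpty.elim u
    | .right _ _, .right _ _, u => G.map (homOfLE u.down)
  map_id x := by
    cases x with
    | left c => exact H.map_id c
    | right b hb => exact G.map_id b
  map_comp {x y z} f g := by
    cases x with
    | right b hb =>
      cases y with
      | left c => exact PEmpty.elim f
      | right b' hb' =>
        cases z with
        | left c => exact PEmpty.elim g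
        | right b'' hb'' =>
          show G.map (homOfLE _) = G.map (homOfLE _) ≫ G.map (homOfLE _)
          rw [← G.map_comp]; exact congrArg G.map (Subsingleton.elim _ _)
    | left c =>
      cases y with
      | right b' hb' =>
        cases z with
        | left c'' => exact PEmpty.elim g
        | right b'' hb'' =>
          show H.map (f.2 ≫ F.map (homOfLE _)) ≫ eqToHom _ ≫ G.map (homOfLE _) =
            (H.map f.2 ≫ eqToHom _ ≫ G.map (homOfLE _)) ≫ G.map (homOfLE _)
          have hcg := Functor.congr_hom w.symm
            (homOfLE (r.monotone (Subtype.mk_le_mk.mpr g.down)) :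
              r ⟨b', f.1⟩ ⟶ r ⟨b'', hW b' f.1 b'' g.down⟩)
          simp only [Functor.comp_map, Functor.comp_obj, Monotone.functor_obj] at hcg
          rw [H.map_comp]
          simp only [Category.assoc]
          congr 1
          rw [hcg]
          simp only [Category.assoc, eqToHom_trans, eqToHom_refl, Category.id_comp,
            eqToHom_trans_assoc, Category.comp_id]
          congr 1
          simp only [← G.map_comp]
          erw [eqToHom_trans_assoc, eqToHom_refl, Category.id_comp, ← G.map_comp]
          apply congrArg G.map; exact Subsingleton.elim _ _
      | left c' =>
        cases z with
        | left c'' => exact H.map_comp f g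
        | right b'' hb'' =>
          show H.map (f ≫ g.2) ≫ eqToHom _ ≫ G.map (homOfLE _) =
            H.map f ≫ H.map g.2 ≫ eqToHom _ ≫ G.map (homOfLE _)
          erw [H.map_comp]; rw [Category.assoc]

end Desc

section Facs

lemma left_inj {c c' : C} (h : (left c : EObj i W hW r F) = left c') : c = c' := by
  injection h

lemma eqToHom_ll {c c' : C} (h : (left c : EObj i W hW r F) = left c') :
    (eqToHom h : (left c : EObj i W hW r F) ⟶ left c') = eqToHom (left_inj h) := by
  have h' : c = c' := left_inj h
  subst h'
  rfl

lemma r_eq (hiW : ∀ a : A, i a ∈ W) (hretr : ∀ a : A, r ⟨i a, hiW a⟩ = a)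
    {b : B} (hw : b ∈ W) (a : A) (ha : i a = b) :
    r ⟨b, hw⟩ = a := by
  subst ha; exact hretr a

lemma i_r_eq (hiW : ∀ a : A, i a ∈ W) (hretr : ∀ a : A, r ⟨i a, hiW a⟩ = a)
    {b : B} (h : b ∈ Set.range i) (hw : b ∈ W) : i (r ⟨b, hw⟩) = b := by
  obtain ⟨a, rfl⟩ := h
  rw [r_eq hiW hretr hw a rfl]

lemma sq_comm_objAux (hiW : ∀ a : A, i a ∈ W) (hretr : ∀ a : A, r ⟨i a, hiW a⟩ = a)
    (a : A) (d : Decidable (i a ∈ Set.range i)) :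
    inlObjAux hiW (i a) d = (left (F.obj a) : EObj i W hW r F) := by
  cases d with
  | isTrue h =>
    dsimp only [inlObjAux]
    rw [r_eq hiW hretr _ a rfl]
  | isFalse h => exact absurd ⟨a, rfl⟩ h

lemma sq_comm_mapAux (hiW : ∀ a : A, i a ∈ W) (hsieve : IsSieveMap i)
    (hretr : ∀ a : A, r ⟨i a, hiW a⟩ = a) {a a' : A} (f : a ⟶ a') (hbb : i a ≤ i a')
    (d : Decidable (i a ∈ Set.range i)) (d' : Decidable (i a' ∈ Set.range i)) :
    inlMapAux hiW hsieve hbb d d' =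
      eqToHom (sq_comm_objAux hiW hretr a d) ≫ ((F ⋙ inrF).map f : _ ⟶ (_ : EObj i W hW r F)) ≫
        eqToHom (sq_comm_objAux hiW hretr a' d').symm := by
  cases d with
  | isFalse h => exact absurd ⟨a, rfl⟩ h
  | isTrue h =>
    cases d' with
    | isFalse h' => exact absurd ⟨a', rfl⟩ h'
    | isTrue h' =>
      dsimp only [inlObjAux, inlMapAux]
      erw [eqToHom_ll (sq_comm_objAux hiW hretr a (.isTrue h)),
        eqToHom_ll (sq_comm_objAux hiW hretr a' (.isTrue h')).symm]
      exact Gmap_eq F (r_eq hiW hretr _ a rfl) (r_eq hiW hretr _ a' rfl) _ f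

lemma sq_comm (hiW : ∀ a : A, i a ∈ W) (hsieve : IsSieveMap i)
    (hretr : ∀ a : A, r ⟨i a, hiW a⟩ = a) :
    i.monotone.functor ⋙ inlF hiW hsieve = F ⋙ (inrF : C ⥤ EObj i W hW r F) :=
  CategoryTheory.Functor.ext (fun a => sq_comm_objAux hiW hretr a _)
    (fun _ _ f => sq_comm_mapAux hiW hsieve hretr f _ _ _)

variable {X : Type} [SmallCategory X]
  (G : B ⥤ X) (H : C ⥤ X) (w : i.monotone.functor ⋙ G = F ⋙ H)

lemma fac_r (hadj : ∀ (a : A) (w : W), i a ≤ (w : B) ↔ a ≤ r w) :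
    (inrF : C ⥤ EObj i W hW r F) ⋙ desc hadj G H w = H := rfl

lemma fac_l_objAux (hiW : ∀ a : A, i a ∈ W)
    (hadj : ∀ (a : A) (w : W), i a ≤ (w : B) ↔ a ≤ r w)
    (hretr : ∀ a : A, r ⟨i a, hiW a⟩ = a) (b : B) (d : Decidable (b ∈ Set.range i)) :
    (desc hadj G H w).obj (inlObjAux hiW b d : EObj i W hW r F) = G.obj b := by
  cases d with
  | isTrue h =>
    have hco := Functor.congr_obj w (r ⟨b, range_mem_W hiW h⟩)
    simp only [Functor.comp_obj, Monotone.functor_obj] at hco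
    dsimp only [inlObjAux, desc]
    rw [← hco, i_r_eq hiW hretr h]
  | isFalse h => rfl

lemma fac_l_mapAux (hiW : ∀ a : A, i a ∈ W) (hsieve : IsSieveMap i)
    (hadj : ∀ (a : A) (w : W), i a ≤ (w : B) ↔ a ≤ r w)
    (hretr : ∀ a : A, r ⟨i a, hiW a⟩ = a) {b b' : B} (hbb : b ≤ b')
    (d : Decidable (b ∈ Set.range i)) (d' : Decidable (b' ∈ Set.range i)) :
    (desc hadj G H w).map (inlMapAux hiW hsieve hbb d d' : (inlObjAux hiW b d : EObj i W hW r F) ⟶ inlObjAux hiW b' d') =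
      eqToHom (fac_l_objAux G H w hiW hadj hretr b d) ≫ G.map (homOfLE hbb) ≫
        eqToHom (fac_l_objAux G H w hiW hadj hretr b' d').symm := by
  cases d with
  | isFalse h =>
    cases d' with
    | isTrue h' =>
      exfalso
      obtain ⟨a, rfl⟩ := h'
      obtain ⟨a'', ha''⟩ := hsieve a b hbb
      exact h ⟨a'', ha''⟩
    | isFalse h' =>
      dsimp only [inlObjAux, inlMapAux, desc]
      exact Gmap_eq G rfl rfl _ _
  | isTrue h =>
    cases d' with
    | isTrue h' =>
      dsimp only [inlObjAux, inlMapAux, desc]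
      have hcg := Functor.congr_hom w.symm
        (homOfLE (r.monotone (Subtype.mk_le_mk.mpr hbb)) :
          r ⟨b, range_mem_W hiW h⟩ ⟶ r ⟨b', range_mem_W hiW h'⟩)
      simp only [Functor.comp_map, Functor.comp_obj, Monotone.functor_obj] at hcg
      rw [hcg]
      rw [Gmap_eq G (i_r_eq hiW hretr h (range_mem_W hiW h))
        (i_r_eq hiW hretr h' (range_mem_W hiW h'))
        (i.monotone.functor.map (homOfLE (r.monotone (Subtype.mk_le_mk.mpr hbb))))
        (homOfLE hbb)]
      simp [eqToHom_trans_assoc, Category.assoc]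
      erw [eqToHom_trans_assoc, eqToHom_trans]
    | isFalse h' =>
      dsimp only [inlObjAux, inlMapAux, desc]
      have hcg := Functor.congr_hom w.symm
        (homOfLE (r.monotone (Subtype.mk_le_mk.mpr hbb)) :
          r ⟨b, range_mem_W hiW h⟩ ⟶ r ⟨b', hW b (range_mem_W hiW h) b' hbb⟩)
      simp only [Functor.comp_map, Functor.comp_obj, Monotone.functor_obj] at hcg
      rw [hcg]
      simp only [Category.assoc, eqToHom_trans_assoc, eqToHom_trans, eqToHom_refl,
        Category.id_comp, Category.comp_id]
      erw [eqToHom_trans_assoc, eqToHom_refl, Category.id_comp]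
      erw [← G.map_comp]
      erw [Gmap_eq G (i_r_eq hiW hretr h (range_mem_W hiW h)) rfl
        (i.monotone.functor.map (homOfLE (r.monotone (Subtype.mk_le_mk.mpr hbb))) ≫
          homOfLE ((hadj (r ⟨b', hW b (range_mem_W hiW h) b' hbb⟩)
            ⟨b', hW b (range_mem_W hiW h) b' hbb⟩).mpr le_rfl))
        (homOfLE hbb)]
      simp [eqToHom_trans_assoc, Category.assoc]
      erw [eqToHom_trans_assoc]

lemma fac_l (hiW : ∀ a : A, i a ∈ W) (hsieve : IsSieveMap i)
    (hadj : ∀ (a : A) (w : W), i a ≤ (w : B) ↔ a ≤ r w)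
    (hretr : ∀ a : A, r ⟨i a, hiW a⟩ = a) :
    (inlF hiW hsieve : B ⥤ EObj i W hW r F) ⋙ desc hadj G H w = G :=
  CategoryTheory.Functor.ext (fun b => fac_l_objAux G H w hiW hadj hretr b _)
    (fun _ _ f => fac_l_mapAux G H w hiW hsieve hadj hretr (leOfHom f) _ _)

lemma inlObjAux_not_mem (hiW : ∀ a : A, i a ∈ W) {b : B} (hb : b ∉ Set.range i)
    (d : Decidable (b ∈ Set.range i)) :
    (inlObjAux hiW b d : EObj i W hW r F) = right b hb := by
  cases d with
  | isTrue h => exact absurd h hb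
  | isFalse h => rfl

instance subsingleton_rr {b b' : B} {hb : b ∉ Set.range i} {hb' : b' ∉ Set.range i} :
    Subsingleton ((right b hb : EObj i W hW r F) ⟶ right b' hb') := by
  constructor
  intro x y
  change PLift (b ≤ b') at x y
  cases x; cases y; rfl

lemma map_eq_eqToHom {P Y : Type} [Preorder P] [SmallCategory Y] (G : P ⥤ Y) {a b : P}
    (f : a ⟶ b) (h : a = b) : G.map f = eqToHom (congrArg G.obj h) := by
  subst h; rw [Subsingleton.elim f (𝟙 a)]; simp

lemma keyAux (hiW : ∀ a : A, i a ∈ W) (hsieve : IsSieveMap i)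
    (hretr : ∀ a : A, r ⟨i a, hiW a⟩ = a)
    {c : C} {b : B} (hb : b ∉ Set.range i) (hw : b ∈ W) (u : c ⟶ F.obj (r ⟨b, hw⟩))
    (hq : i (r ⟨b, hw⟩) ≤ b)
    (d : Decidable (i (r ⟨b, hw⟩) ∈ Set.range i)) (d' : Decidable (b ∈ Set.range i)) :
    (inrF.map u : (left c : EObj i W hW r F) ⟶ _) ≫
        eqToHom (sq_comm_objAux hiW hretr (r ⟨b, hw⟩) d).symm ≫
        inlMapAux hiW hsieve hq d d' ≫ eqToHom (inlObjAux_not_mem hiW hb d') =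
      (⟨hw, u⟩ : (left c : EObj i W hW r F) ⟶ right b hb) := by
  cases d with
  | isFalse h => exact absurd ⟨_, rfl⟩ h
  | isTrue h =>
    cases d' with
    | isTrue h' => exact absurd h' hb
    | isFalse h' =>
      dsimp only [inlObjAux, inlMapAux]
      erw [eqToHom_ll]
      show (⟨_, _⟩ : Σ' (hw : b ∈ W), (c ⟶ F.obj (r ⟨b, hw⟩))) = ⟨hw, u⟩
      refine congrArg (PSigma.mk _) ?_
      show u ≫ eqToHom _ ≫ F.map (homOfLE _) ≫ F.map (homOfLE _) = u
      rw [map_eq_eqToHom F (homOfLE (r.monotone (Subtype.mk_le_mk.mpr hq)))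
        (by rw [r_eq hiW hretr _ (r ⟨b, hw⟩) rfl]),
        map_eq_eqToHom F (homOfLE _) (rfl : r ⟨b, _⟩ = r ⟨b, _⟩)]
      simp

lemma conj_cancel {Y : Type} [SmallCategory Y] {x y x' y' : Y} (e : x' = x) (e' : y = y')
    {g g' : x ⟶ y} (h : eqToHom e ≫ g ≫ eqToHom e' = eqToHom e ≫ g' ≫ eqToHom e') :
    g = g' := by
  subst e; subst e'; simpa using h

end Facs
end EObj
end Stmt5Aux

open Stmt5Aux Stmt5Aux.EObj

/-- Let `i : A → B` be a Dwyer map between posets, with factorization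
`A → W → B` (`W ⊆ B` the cosieve, `r : W → A` the right adjoint retraction of `A → W`),
and let `F : A ⥤ C` be a functor to a small category.  Let `D` be the pushout of `i`
along `F` in `Cat`, with structure maps `inl : B ⥤ D` and `inr : C ⥤ D`.  Then
`ob(D) = ob(C) ⊔ (ob(B) \ ob(A))`, and for objects `d, d'` of `D`:
`D(d, d') = B(d, d')` if both lie in `ob(B) \ ob(A)`; `D(d, d') = C(d, d')` if both lie
in `ob(C)`; `D(d, d') = ∅` if `d ∈ ob(B) \ ob(A)` and `d' ∈ ob(C)`; and
`D(d, d') = C(d, F(r d'))` if `d ∈ ob(C)` and `d' ∈ ob(B) \ ob(A)` (this hom-set being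
empty when `d' ∉ W`). -/
theorem stmt5
    (A B : Type) [PartialOrder A] [PartialOrder B]
    (i : A →o B) (hinj : Function.Injective i) (hsieve : IsSieveMap i)
    (W : Set B) (hW : IsCosieveSet W) (hiW : ∀ a : A, i a ∈ W)
    (r : W →o A) (hadj : ∀ (a : A) (w : W), i a ≤ (w : B) ↔ a ≤ r w)
    (hretr : ∀ a : A, r ⟨i a, hiW a⟩ = a)
    (C : Type) [SmallCategory C] (F : A ⥤ C)
    (D : Type) [SmallCategory D]
    (inl : B ⥤ D) (inr : C ⥤ D)
    (sq : IsPushout (show Cat.of A ⟶ Cat.of B from i.monotone.functor.toCatHom)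
      (show Cat.of A ⟶ Cat.of C from F.toCatHom)
      (show Cat.of B ⟶ Cat.of D from inl.toCatHom) (show Cat.of C ⟶ Cat.of D from inr.toCatHom)) :
    -- objects: `ob(D) = ob(C) ⊔ (ob(B) \ ob(A))`
    (Function.Bijective
      (Sum.elim (inr.obj : C → D)
        (fun b : {b : B // b ∉ Set.range i} => inl.obj b.1))) ∧
    -- `D(d, d') = B(d, d')` for `d, d' ∈ ob(B) \ ob(A)`
    (∀ b b' : B, b ∉ Set.range i → b' ∉ Set.range i →
      Function.Bijective (fun f : b ⟶ b' => inl.map f)) ∧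
    -- `D(d, d') = C(d, d')` for `d, d' ∈ ob(C)`
    (∀ c c' : C, Function.Bijective (fun f : c ⟶ c' => inr.map f)) ∧
    -- `D(d, d') = ∅` for `d ∈ ob(B) \ ob(A)`, `d' ∈ ob(C)`
    (∀ (b : B) (c : C), b ∉ Set.range i → IsEmpty (inl.obj b ⟶ inr.obj c)) ∧
    -- `D(d, d') = C(d, F(r d'))` for `d ∈ ob(C)`, `d' ∈ ob(B) \ ob(A)`
    (∀ (c : C) (b : B) (_ : b ∉ Set.range i) (hw : b ∈ W),
      Function.Bijective (fun u : c ⟶ F.obj (r ⟨b, hw⟩) =>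
        inr.map u ≫
          eqToHom (Functor.congr_obj
            (show i.monotone.functor ⋙ inl = F ⋙ inr from congrArg Cat.Hom.toFunctor sq.w) (r ⟨b, hw⟩)).symm ≫
          inl.map (homOfLE ((hadj (r ⟨b, hw⟩) ⟨b, hw⟩).mpr le_rfl)))) ∧
    (∀ (c : C) (b : B), b ∉ Set.range i → b ∉ W →
      IsEmpty (inr.obj c ⟶ inl.obj b)) := by
  have wD : i.monotone.functor ⋙ inl = F ⋙ inr := congrArg Cat.Hom.toFunctor sq.w
  set L : EObj i W hW r F ⥤ D := desc hadj inl inr wD with hLdef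
  let inlE : B ⥤ EObj i W hW r F := inlF hiW hsieve
  let inrE : C ⥤ EObj i W hW r F := inrF
  have wE : (show Cat.of A ⟶ Cat.of B from i.monotone.functor.toCatHom) ≫
      (show Cat.of B ⟶ Cat.of (EObj i W hW r F) from inlE.toCatHom) =
      (show Cat.of A ⟶ Cat.of C from F.toCatHom) ≫
        (show Cat.of C ⟶ Cat.of (EObj i W hW r F) from inrE.toCatHom) :=
    congrArg Functor.toCatHom (sq_comm hiW hsieve hretr)
  set K : D ⥤ EObj i W hW r F := (sq.desc _ _ wE).toFunctor with hKdef
  have hKl : inl ⋙ K = inlF hiW hsieve := congrArg Cat.Hom.toFunctor (sq.inl_desc _ _ wE)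
  have hKr : inr ⋙ K = (inrF : C ⥤ EObj i W hW r F) := congrArg Cat.Hom.toFunctor (sq.inr_desc _ _ wE)
  have hLl : inlF hiW hsieve ⋙ L = inl := fac_l inl inr wD hiW hsieve hadj hretr
  have hLr : (inrF : C ⥤ EObj i W hW r F) ⋙ L = inr := rfl
  have hKL : (K ⋙ L : D ⥤ D) = 𝟭 D := by
    have h1 : (show Cat.of D ⟶ Cat.of D from (K ⋙ L).toCatHom) = 𝟙 (Cat.of D) := by
      apply sq.hom_ext
      · refine Cat.Hom.ext ?_
        show inl ⋙ (K ⋙ L) = inl ⋙ 𝟭 D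
        calc inl ⋙ (K ⋙ L) = (inl ⋙ K) ⋙ L := rfl
          _ = inlF hiW hsieve ⋙ L := by rw [hKl]
          _ = inl := hLl
          _ = inl ⋙ 𝟭 D := rfl
      · refine Cat.Hom.ext ?_
        show inr ⋙ (K ⋙ L) = inr ⋙ 𝟭 D
        calc inr ⋙ (K ⋙ L) = (inr ⋙ K) ⋙ L := rfl
          _ = (inrF : C ⥤ EObj i W hW r F) ⋙ L := by rw [hKr]
          _ = inr := hLr
          _ = inr ⋙ 𝟭 D := rfl
    exact congrArg Cat.Hom.toFunctor h1
  have hKinj : ∀ {d d' : D} (g g' : d ⟶ d'), K.map g = K.map g' → g = g' := by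
    intro d d' g g' hgg
    have h1 := Functor.congr_hom hKL.symm g
    have h2 := Functor.congr_hom hKL.symm g'
    simp only [Functor.id_map, Functor.comp_map] at h1 h2
    rw [h1, h2, hgg]
  have hobjR : ∀ c : C, K.obj (inr.obj c) = left c := fun c => Functor.congr_obj hKr c
  have hobjL : ∀ b : B, K.obj (inl.obj b) = (inlF hiW hsieve).obj b :=
    fun b => Functor.congr_obj hKl b
  have hobjLn : ∀ (b : B) (hb : b ∉ Set.range i), K.obj (inl.obj b) = right b hb :=
    fun b hb => (hobjL b).trans (inlObjAux_not_mem hiW hb _)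
  have hLK : ∀ d : D, L.obj (K.obj d) = d := fun d => Functor.congr_obj hKL d
  refine ⟨⟨?_, ?_⟩, ?_, ?_, ?_, ?_, ?_⟩
  · -- objects injective
    rintro (c | ⟨b, hb⟩) (c' | ⟨b', hb'⟩) hxy <;> simp only [Sum.elim_inl, Sum.elim_inr] at hxy
    · have h2 : (left c : EObj i W hW r F) = left c' := by
        rw [← hobjR c, ← hobjR c', hxy]
      obtain rfl : c = c' := by injection h2
      rfl
    · exfalso
      have h2 : (left c : EObj i W hW r F) = right b' hb' := by
        rw [← hobjR c, ← hobjLn b' hb', hxy]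
      cases h2
    · exfalso
      have h2 : (right b hb : EObj i W hW r F) = left c' := by
        rw [← hobjLn b hb, ← hobjR c', hxy]
      cases h2
    · have h2 : (right b hb : EObj i W hW r F) = right b' hb' := by
        rw [← hobjLn b hb, ← hobjLn b' hb', hxy]
      obtain rfl : b = b' := by injection h2
      rfl
  · -- objects surjective
    intro d
    rcases hKo : K.obj d with c | ⟨b, hb⟩
    · refine ⟨Sum.inl c, ?_⟩
      have h2 := hLK d
      rw [hKo] at h2
      exact h2
    · refine ⟨Sum.inr ⟨b, hb⟩, ?_⟩
      have h2 := hLK d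
      rw [hKo] at h2
      exact h2
  · -- B-homs
    intro b b' hb hb'
    constructor
    · intro f f' _
      exact Subsingleton.elim f f'
    · intro g
      have m : (right b hb : EObj i W hW r F) ⟶ right b' hb' :=
        eqToHom (hobjLn b hb).symm ≫ K.map g ≫ eqToHom (hobjLn b' hb')
      refine ⟨homOfLE (PLift.down m), ?_⟩
      apply hKinj
      have hss : Subsingleton (K.obj (inl.obj b) ⟶ K.obj (inl.obj b')) := by
        rw [hobjLn b hb, hobjLn b' hb']
        infer_instance
      exact hss.elim _ _
  · -- C-homs
    intro c c'
    constructor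
    · intro u u' huu
      simp only at huu
      have h3 : K.map (inr.map u) = K.map (inr.map u') := by rw [huu]
      have h1 := Functor.congr_hom hKr u
      have h2 := Functor.congr_hom hKr u'
      simp only [Functor.comp_map] at h1 h2
      rw [h1, h2] at h3
      have h5 : (inrF.map u : (left c : EObj i W hW r F) ⟶ left c') = inrF.map u' :=
        conj_cancel _ _ h3
      exact h5
    · intro g
      refine ⟨(show (left c : EObj i W hW r F) ⟶ left c' from
        eqToHom (hobjR c).symm ≫ K.map g ≫ eqToHom (hobjR c')), ?_⟩
      apply hKinj
      have h1 := Functor.congr_hom hKr (show (left c : EObj i W hW r F) ⟶ left c' from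
        eqToHom (hobjR c).symm ≫ K.map g ≫ eqToHom (hobjR c'))
      simp only [Functor.comp_map] at h1
      refine h1.trans ?_
      show eqToHom _ ≫ (eqToHom (hobjR c).symm ≫ K.map g ≫ eqToHom (hobjR c')) ≫ eqToHom _ =
        K.map g
      simp
      erw [eqToHom_trans_assoc, eqToHom_trans, eqToHom_refl, eqToHom_refl, Category.id_comp, Category.comp_id]
  · -- empty: B-side to C-side
    intro b c hb
    constructor
    intro g
    have m : (right b hb : EObj i W hW r F) ⟶ left c :=
      eqToHom (hobjLn b hb).symm ≫ K.map g ≫ eqToHom (hobjR c)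
    exact (show PEmpty from m).elim
  · -- the mixed homs
    intro c b hb hw
    have hKey : ∀ u : c ⟶ F.obj (r ⟨b, hw⟩),
        K.map (inr.map u ≫
          eqToHom (Functor.congr_obj
            (show i.monotone.functor ⋙ inl = F ⋙ inr from congrArg Cat.Hom.toFunctor sq.w) (r ⟨b, hw⟩)).symm ≫
          inl.map (homOfLE ((hadj (r ⟨b, hw⟩) ⟨b, hw⟩).mpr le_rfl))) =
        eqToHom (hobjR c) ≫ ((⟨hw, u⟩ : Σ' (hw' : b ∈ W), (c ⟶ F.obj (r ⟨b, hw'⟩))) :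
          (left c : EObj i W hW r F) ⟶ right b hb) ≫ eqToHom (hobjLn b hb).symm := by
      intro u
      rw [K.map_comp, K.map_comp]
      have h1 := Functor.congr_hom hKr u
      have h2 := Functor.congr_hom hKl (homOfLE ((hadj (r ⟨b, hw⟩) ⟨b, hw⟩).mpr le_rfl))
      simp only [Functor.comp_map] at h1 h2
      erw [h1, h2, eqToHom_map K]
      rw [← keyAux hiW hsieve hretr hb hw u ((hadj (r ⟨b, hw⟩) ⟨b, hw⟩).mpr le_rfl)
        (Classical.dec _) (Classical.dec _)]
      dsimp only [inlF]
      simp [eqToHom_trans, eqToHom_trans_assoc, Category.assoc]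
      erw [eqToHom_trans_assoc, eqToHom_trans_assoc, Category.assoc, Category.assoc, Category.assoc,
        eqToHom_trans]
      rfl
    constructor
    · intro u u' huu
      simp only at huu
      have h3 := congrArg K.map huu
      rw [hKey u, hKey u'] at h3
      have h5 := conj_cancel _ _ h3
      have h6 : ((⟨hw, u⟩ : Σ' (hw' : b ∈ W), (c ⟶ F.obj (r ⟨b, hw'⟩)))) = ⟨hw, u'⟩ := h5
      simpa using h6
    · intro g
      refine ⟨(show Σ' (hw' : b ∈ W), (c ⟶ F.obj (r ⟨b, hw'⟩)) from
        eqToHom (hobjR c).symm ≫ K.map g ≫ eqToHom (hobjLn b hb)).2, ?_⟩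
      apply hKinj
      rw [hKey]
      rw [show ((⟨hw, (show Σ' (hw' : b ∈ W), (c ⟶ F.obj (r ⟨b, hw'⟩)) from
          eqToHom (hobjR c).symm ≫ K.map g ≫ eqToHom (hobjLn b hb)).2⟩ :
          Σ' (hw' : b ∈ W), (c ⟶ F.obj (r ⟨b, hw'⟩))) :
          (left c : EObj i W hW r F) ⟶ right b hb) =
        eqToHom (hobjR c).symm ≫ K.map g ≫ eqToHom (hobjLn b hb) from rfl]
      simp
  · -- empty: C-side to non-W
    intro c b hb hbW
    constructor
    intro g
    have m : (left c : EObj i W hW r F) ⟶ right b hb :=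
      eqToHom (hobjR c).symm ≫ K.map g ≫ eqToHom (hobjLn b hb)
    exact hbW (show Σ' (hw' : b ∈ W), (c ⟶ F.obj (r ⟨b, hw'⟩)) from m).1
end

section
/- Let I be a small category, O : I → Set a functor with colim_I O = *, and let X₀ → X₁ → ⋯ → X_a → X_{a+1} → ⋯ be a transfinite sequence of natural transformations in Set^I such that each X_a → X_{a+1} is objectwise injective and, for every morphism g : i → j in I and every object x, x lies in the image of X_b(i) iff X(g)(x) lies in the image of X_b(j). Then every natural transformation f : O → colim_a X_a factors through some X_b; hence colim_a Hom(O, X_a) → Hom(O, colim_a X_a) is a bijection. -/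
open CategoryTheory

/-- Let `I` be a small category, `O : I ⥤ Set` with `colim_I O = *`, and
let `X : J ⥤ Set^I` be a transfinite sequence (indexed by a nonempty well-ordered linear
order `J`) of objectwise injective natural transformations such that, for every stage `b`,
every morphism `g : i ⟶ j` of `I` and every element `x` of the colimit at `i`, `x` lies in
the image of `X_b(i)` iff its image under `g` lies in the image of `X_b(j)`.  Then every
`f : O ⟶ colim_a X_a` factors through some `X_b`; hence the canonical map
`colim_a Hom(O, X_a) → Hom(O, colim_a X_a)` is a bijection. -/
theorem stmt18 (I : Type) [SmallCategory I] (O : I ⥤ Type)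
    (hO : ColimitIsPoint O)
    (J : Type) [LinearOrder J] [Nonempty J] [WellFoundedLT J]
    (X : J ⥤ (I ⥤ Type))
    (hinj : ∀ (a b : J) (h : a ⟶ b) (i : I), Function.Injective ((X.map h).app i))
    (c : Limits.Cocone X) (hc : Limits.IsColimit c)
    (him : ∀ (b : J) {i j : I} (g : i ⟶ j) (x : c.pt.obj i),
      x ∈ Set.range ((c.ι.app b).app i) ↔ c.pt.map g x ∈ Set.range ((c.ι.app b).app j)) :
    (∀ f : O ⟶ c.pt, ∃ (b : J) (g : O ⟶ X.obj b), g ≫ c.ι.app b = f) ∧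
      Nonempty (Limits.IsColimit
        ((coyoneda.obj (Opposite.op O)).mapCocone c)) := by
  classical
  obtain ⟨⟨z⟩, hsub⟩ := hO
  obtain ⟨i₀, x₀, hz⟩ := Limits.Types.jointly_surjective' z
  -- evaluated colimits
  have hev : ∀ i : I, Limits.IsColimit (((evaluation I Type).obj i).mapCocone c) :=
    fun i => Limits.isColimitOfPreserves _ hc
  -- all maps into the colimit are objectwise injective
  have hιinj : ∀ (b : J) (i : I), Function.Injective ((c.ι.app b).app i) := by
    intro b i u v huv
    have h := (Limits.Types.FilteredColimit.isColimit_eq_iff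
      (X ⋙ (evaluation I Type).obj i) (hev i) (i := b) (j := b) (xi := u) (xj := v)).1 huv
    obtain ⟨k, f, g, hfg⟩ := h
    have : f = g := Subsingleton.elim _ _
    subst this
    exact hinj b k f i hfg
  -- the main factorization claim
  have main : ∀ f : O ⟶ c.pt, ∃ (b : J) (g : O ⟶ X.obj b), g ≫ c.ι.app b = f := by
    intro f
    obtain ⟨b, y, hy⟩ := Limits.Types.jointly_surjective_of_isColimit (hev i₀) (f.app i₀ x₀)
    -- the invariant propagates along zigzags
    have key : ∀ p q : Σ i, O.obj i, Relation.EqvGen (O.ColimitTypeRel) p q →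
        (f.app p.1 p.2 ∈ Set.range ((c.ι.app b).app p.1) ↔
          f.app q.1 q.2 ∈ Set.range ((c.ι.app b).app q.1)) := by
      intro p q h
      induction h with
      | rel p q hpq =>
          obtain ⟨g, hg⟩ := hpq
          have : f.app q.1 q.2 = c.pt.map g (f.app p.1 p.2) := by
            rw [hg]; exact ConcreteCategory.congr_hom (f.naturality g) p.2
          rw [this]
          exact him b g _
      | refl _ => exact Iff.rfl
      | symm _ _ _ ih => exact ih.symm
      | trans _ _ _ _ _ ih1 ih2 => exact ih1.trans ih2
    have hP : ∀ (i : I) (x : O.obj i), f.app i x ∈ Set.range ((c.ι.app b).app i) := by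
      intro i x
      have heq : Limits.colimit.ι O i x = Limits.colimit.ι O i₀ x₀ := by
        rw [hz]; exact hsub.elim _ _
      have := Limits.Types.colimit_eq heq
      exact (key ⟨i, x⟩ ⟨i₀, x₀⟩ this).2 ⟨y, hy⟩
    refine ⟨b, ⟨fun i => TypeCat.ofHom (fun x => (hP i x).choose), ?_⟩, ?_⟩
    · intro i j m
      ext x
      apply hιinj b j
      have h1 : (c.ι.app b).app j ((X.obj b).map m ((hP i x).choose)) =
          c.pt.map m ((c.ι.app b).app i (hP i x).choose) :=
        ConcreteCategory.congr_hom ((c.ι.app b).naturality m) _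
      show (c.ι.app b).app j (hP j (O.map m x)).choose = (c.ι.app b).app j ((X.obj b).map m (hP i x).choose)
      rw [h1, (hP i x).choose_spec, (hP j (O.map m x)).choose_spec]
      have := ConcreteCategory.congr_hom (f.naturality m) x
      simp only [types_comp_apply] at this
      exact this
    · ext i x
      exact (hP i x).choose_spec
  refine ⟨main, ⟨Limits.Types.FilteredColimit.isColimitOf _ _ ?_ ?_⟩⟩
  · intro φ
    obtain ⟨b, g, hg⟩ := main φ
    exact ⟨b, g, hg.symm⟩
  · intro a a' g g' hgg'
    refine ⟨max a a', homOfLE (le_max_left a a'), homOfLE (le_max_right a a'), ?_⟩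
    show g ≫ X.map _ = g' ≫ X.map _
    ext i x
    apply hιinj (max a a') i
    have h1 : (c.ι.app (max a a')).app i ((X.map (homOfLE (le_max_left a a'))).app i (g.app i x))
        = (c.ι.app a).app i (g.app i x) := by
      have := c.w (homOfLE (le_max_left a a'))
      exact ConcreteCategory.congr_hom (congr_app this i) (g.app i x)
    have h2 : (c.ι.app (max a a')).app i
        ((X.map (homOfLE (le_max_right a a'))).app i (g'.app i x))
        = (c.ι.app a').app i (g'.app i x) := by
      have := c.w (homOfLE (le_max_right a a'))
      exact ConcreteCategory.congr_hom (congr_app this i) (g'.app i x)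
    show (c.ι.app (max a a')).app i ((g ≫ X.map _).app i x) = (c.ι.app (max a a')).app i ((g' ≫ X.map _).app i x)
    rw [NatTrans.comp_app_apply, NatTrans.comp_app_apply]
    rw [h1, h2]
    have := congr_app hgg' i
    exact ConcreteCategory.congr_hom this x
end
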